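/- Let n ≥ 1 and identify the space 𝕊^n of complex symmetric n×n matrices with ℂ^{n(n+1)/2} via the entries k_ij for i ≤ j. Let L ⊆ 𝕊^n be the linear subspace of symmetric matrices all of whose off-diagonal entries are equal to one another (this is the space L_{S_n} of the Brownian motion star tree model on n+1 leaves). Let Y = { Σ^{-1} : Σ ∈ L, Σ invertible } ⊆ 𝕊^n, and let cl(Y) denote the Zariski closure of Y, i.e., the zero locus in 𝕊^n ≅ ℂ^{n(n+1)/2} of the vanishing ideal of Y. Let L^⊥ be the orthogonal complement of L in 𝕊^n with respect to the pairing ⟨A,B⟩ = trace(AB). Then cl(Y) ∩ L^⊥ = {0}, i.e., the only matrix lying in both cl(Y) and L^⊥ is the zero matrix. -/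

import Mathlib

/-- The index set of entries `k_ij`, `i ≤ j`, of a symmetric `n × n` matrix; via these
coordinates the space `𝕊^n` of complex symmetric matrices is identified with
`ℂ^{n(n+1)/2}`. -/
abbrev SymIdx (n : ℕ) := {q : Fin n × Fin n // q.1 ≤ q.2}

/-- The symmetric matrix corresponding to a coordinate vector `x ∈ ℂ^{SymIdx n}`. -/
noncomputable def toMat (n : ℕ) (x : SymIdx n → ℂ) : Matrix (Fin n) (Fin n) ℂ :=
  Matrix.of fun i j =>
    if h : i ≤ j then x ⟨(i, j), h⟩ else x ⟨(j, i), le_of_not_ge h⟩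

/-- The linear space `L = L_{S_n}` of symmetric matrices all of whose off-diagonal
entries are equal to one another (the Brownian motion star tree model on `n+1`
leaves). -/
def Lstar (n : ℕ) : Set (Matrix (Fin n) (Fin n) ℂ) :=
  {S | S.IsSymm ∧ ∀ i j i' j' : Fin n, i ≠ j → i' ≠ j' → S i j = S i' j'}

/-- The orthogonal complement `L^⊥` of `L = L_{S_n}` inside the space of complex
symmetric matrices, with respect to the pairing `⟨A, B⟩ = trace (A * B)`. -/
def LstarPerp (n : ℕ) : Set (Matrix (Fin n) (Fin n) ℂ) :=
  {K | K.IsSymm ∧ ∀ S ∈ Lstar n, (K * S).trace = 0}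

/-- The set `Y = {Σ⁻¹ : Σ ∈ L, Σ invertible}`, in the coordinates `SymIdx n`. -/
def Yset (n : ℕ) : Set (SymIdx n → ℂ) :=
  {x | ∃ S : Matrix (Fin n) (Fin n) ℂ, S ∈ Lstar n ∧ IsUnit S ∧
    ∀ q : SymIdx n, x q = S⁻¹ q.1.1 q.1.2}

namespace Star15

open Matrix Finset MvPolynomial

variable {n : ℕ} {S K : Matrix (Fin n) (Fin n) ℂ} {a : ℂ}




lemma rowEq (hSK : S * K = 1) (ha : ∀ p q : Fin n, p ≠ q → S p q = a) (i j : Fin n) :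
    (S i i - a) * K i j + a * ∑ m, K m j = if i = j then 1 else 0 := by
  have h := congrFun (congrFun hSK i) j
  rw [Matrix.mul_apply] at h
  have h2 : ∀ m ∈ Finset.univ, S i m * K m j
      = (if m = i then (S i i - a) * K i j else 0) + a * K m j := by
    intro m _
    by_cases hm : m = i
    · subst hm; simp; ring
    · rw [ha i m (Ne.symm hm)]; simp [hm]
  rw [Finset.sum_congr rfl h2, Finset.sum_add_distrib, Finset.sum_ite_eq' Finset.univ i,
    ← Finset.mul_sum] at h
  simpa [Matrix.one_apply] using h

lemma colEq (hKS : K * S = 1) (ha : ∀ p q : Fin n, p ≠ q → S p q = a) (i j : Fin n) :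
    (S j j - a) * K i j + a * ∑ m, K i m = if i = j then 1 else 0 := by
  have h := congrFun (congrFun hKS i) j
  rw [Matrix.mul_apply] at h
  have h2 : ∀ m ∈ Finset.univ, K i m * S m j
      = (if m = j then (S j j - a) * K i j else 0) + a * K i m := by
    intro m _
    by_cases hm : m = j
    · subst hm; simp; ring
    · rw [ha m j hm]; simp [hm]; ring
  rw [Finset.sum_congr rfl h2, Finset.sum_add_distrib, Finset.sum_ite_eq' Finset.univ j,
    ← Finset.mul_sum] at h
  simpa [Matrix.one_apply] using h

lemma rowEq' (hSK : S * K = 1) (ha : ∀ p q : Fin n, p ≠ q → S p q = a) {i j : Fin n}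
    (hij : i ≠ j) : (S i i - a) * K i j = -(a * ∑ m, K m j) := by
  have := rowEq hSK ha i j
  rw [if_neg hij] at this
  linear_combination this

lemma rowEqDiag (hSK : S * K = 1) (ha : ∀ p q : Fin n, p ≠ q → S p q = a) (i : Fin n) :
    (S i i - a) * K i i = 1 - a * ∑ m, K m i := by
  have := rowEq hSK ha i i
  rw [if_pos rfl] at this
  linear_combination this

lemma colEq' (hKS : K * S = 1) (ha : ∀ p q : Fin n, p ≠ q → S p q = a) {i j : Fin n}
    (hij : i ≠ j) : (S j j - a) * K i j = -(a * ∑ m, K i m) := by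
  have := colEq hKS ha i j
  rw [if_neg hij] at this
  linear_combination this

lemma hZero (hSK : S * K = 1) (ha : ∀ p q : Fin n, p ≠ q → S p q = a) {p : Fin n}
    (hp : S p p = a) (m : Fin n) : a * ∑ t, K t m = if p = m then 1 else 0 := by
  have := rowEq hSK ha p m
  rw [hp] at this
  simpa using this

/-- at most one diagonal entry of `S` equals `a`. -/
lemma cMostOne (hSK : S * K = 1) (ha : ∀ p q : Fin n, p ≠ q → S p q = a) {p q : Fin n}
    (hp : S p p = a) (hqp : q ≠ p) : S q q ≠ a := by
  intro hq
  have h1 := hZero hSK ha hp p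
  have h2 := hZero hSK ha hq p
  rw [if_pos rfl] at h1
  rw [if_neg hqp] at h2
  rw [h1] at h2
  exact one_ne_zero h2

lemma cancel {u v w : ℂ} (hu : u ≠ 0) (hv : v ≠ 0) (h : u * (v * w) = 0) : w = 0 := by
  rcases mul_eq_zero.mp h with h' | h'
  · exact absurd h' hu
  rcases mul_eq_zero.mp h' with h'' | h''
  · exact absurd h'' hv
  · exact h''


lemma unmul {u w : ℂ} (hu : u ≠ 0) (h : u * w = 0) : w = 0 := by
  rcases mul_eq_zero.mp h with h' | h'
  · exact absurd h' hu
  · exact h'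

lemma invB (hSK : S * K = 1) (hKS : K * S = 1)
    (ha : ∀ p q : Fin n, p ≠ q → S p q = a) {i j k l : Fin n}
    (hij : i ≠ j) (hik : i ≠ k) (hil : i ≠ l) (hjk : j ≠ k) (hjl : j ≠ l) (hkl : k ≠ l) :
    K i j * K k l = K i l * K k j := by
  by_cases hrow : S j j = a ∨ S l l = a
  · have hci : S i i - a ≠ 0 := sub_ne_zero_of_ne
      (hrow.elim (fun h => cMostOne hSK ha h hij) (fun h => cMostOne hSK ha h hil))
    have hck : S k k - a ≠ 0 := sub_ne_zero_of_ne
      (hrow.elim (fun h => cMostOne hSK ha h hjk.symm) (fun h => cMostOne hSK ha h hkl))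
    have e1 := rowEq' hSK ha hij
    have e2 := rowEq' hSK ha hkl
    have e3 := rowEq' hSK ha hil
    have e4 := rowEq' hSK ha hjk.symm
    have h0 : (S i i - a) * ((S k k - a) * (K i j * K k l - K i l * K k j)) = 0 := by
      linear_combination ((S k k - a) * K k l) * e1 + (-(a * ∑ m, K m j)) * e2
        - ((S k k - a) * K k j) * e3 - (-(a * ∑ m, K m l)) * e4
    exact sub_eq_zero.mp (unmul hck (unmul hci h0))
  · push_neg at hrow
    have hcj : S j j - a ≠ 0 := sub_ne_zero_of_ne hrow.1
    have hcl : S l l - a ≠ 0 := sub_ne_zero_of_ne hrow.2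
    have e1 := colEq' hKS ha hij
    have e2 := colEq' hKS ha hkl
    have e3 := colEq' hKS ha hil
    have e4 := colEq' hKS ha (show k ≠ j from hjk.symm)
    have h0 : (S j j - a) * ((S l l - a) * (K i j * K k l - K i l * K k j)) = 0 := by
      linear_combination ((S l l - a) * K k l) * e1 + (-(a * ∑ m, K i m)) * e2
        - ((S j j - a) * K k j) * e3 - (-(a * ∑ m, K i m)) * e4
    exact sub_eq_zero.mp (unmul hcl (unmul hcj h0))

lemma invA (hSK : S * K = 1) (hKS : K * S = 1)
    (ha : ∀ p q : Fin n, p ≠ q → S p q = a) {i j k : Fin n}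
    (hij : i ≠ j) (hik : i ≠ k) (hjk : j ≠ k) :
    K i k * K j k - K i j * K k k = K i j * K k j - K i k * K j j := by
  by_cases hcj0 : S j j = a
  · have hci : S i i - a ≠ 0 := sub_ne_zero_of_ne (cMostOne hSK ha hcj0 hij)
    have hck : S k k - a ≠ 0 := sub_ne_zero_of_ne (cMostOne hSK ha hcj0 hjk.symm)
    have hz := hZero hSK ha hcj0
    have hzj : a * ∑ t, K t j = 1 := by simpa using hz j
    have hzk : a * ∑ t, K t k = 0 := by simpa [if_neg hjk] using hz k
    have hKik : K i k = 0 := by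
      refine unmul hci ?_
      rw [rowEq' hSK ha hik, hzk, neg_zero]
    have h6 : K k j + K k k = 0 := by
      refine unmul hck ?_
      have e3 := rowEq' hSK ha hjk.symm
      have e4 := rowEqDiag hSK ha k
      linear_combination e3 + e4 - hzj - hzk
    linear_combination (K j k + K j j) * hKik - K i j * h6
  · by_cases hck0 : S k k = a
    · have hci : S i i - a ≠ 0 := sub_ne_zero_of_ne (cMostOne hSK ha hck0 hik)
      have hcj : S j j - a ≠ 0 := sub_ne_zero_of_ne (cMostOne hSK ha hck0 hjk)
      have hz := hZero hSK ha hck0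
      have hzj : a * ∑ t, K t j = 0 := by simpa [if_neg hjk.symm] using hz j
      have hzk : a * ∑ t, K t k = 1 := by simpa using hz k
      have hKij : K i j = 0 := by
        refine unmul hci ?_
        rw [rowEq' hSK ha hij, hzj, neg_zero]
      have h6 : K j k + K j j = 0 := by
        refine unmul hcj ?_
        have e3 := rowEq' hSK ha hjk
        have e4 := rowEqDiag hSK ha j
        linear_combination e3 + e4 - hzk - hzj
      linear_combination K i k * h6 - (K k k + K k j) * hKij
    · have hcj : S j j - a ≠ 0 := sub_ne_zero_of_ne hcj0
      have hck : S k k - a ≠ 0 := sub_ne_zero_of_ne hck0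
      have e1 := colEq' hKS ha hik
      have e2 := rowEq' hSK ha hjk
      have e3 := rowEqDiag hSK ha j
      have e4 := colEq' hKS ha hij
      have e5 := rowEq' hSK ha hjk.symm
      have e6 := rowEqDiag hSK ha k
      have h0 : (S j j - a) * ((S k k - a) *
          (K i k * K j k - K i j * K k k - (K i j * K k j - K i k * K j j))) = 0 := by
        linear_combination ((S j j - a) * K j k + (S j j - a) * K j j) * e1
          + (-(a * ∑ m, K i m)) * (e2 + e3)
          - ((S k k - a) * K k j + (S k k - a) * K k k) * e4
          - (-(a * ∑ m, K i m)) * (e5 + e6)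
      exact sub_eq_zero.mp (unmul hck (unmul hcj h0))



lemma comb {n : ℕ} {K : Matrix (Fin n) (Fin n) ℂ}
    (hsym : ∀ i j, K i j = K j i) (hdiag : ∀ i, K i i = 0)
    (hsum : ∑ i, ∑ j, K i j = 0)
    (hA : ∀ i j k : Fin n, i ≠ j → i ≠ k → j ≠ k →
      K i k * K j k - K i j * K k k = K i j * K k j - K i k * K j j)
    (hB : ∀ i j k l : Fin n, i ≠ j → i ≠ k → i ≠ l → j ≠ k → j ≠ l → k ≠ l →
      K i j * K k l = K i l * K k j)
    (p q : Fin n) : K p q = 0 := by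
  classical
  by_cases hpq : p = q
  · subst hpq; exact hdiag p
  by_contra ha0
  have h1 : ∀ i j k : Fin n, i ≠ j → i ≠ k → j ≠ k → K j k * (K i k - K i j) = 0 := by
    intro i j k hij hik hjk
    have h4 := hA i j k hij hik hjk
    rw [hdiag k, hdiag j] at h4
    linear_combination h4 + K i j * (hsym k j)
  have g1 : ∀ r, r ≠ p → r ≠ q → K r p = K r q := by
    intro r hrp hrq
    have h2 := h1 r p q hrp hrq hpq
    exact (sub_eq_zero.mp (unmul ha0 h2)).symm
  have g2 : ∀ r, r ≠ p → r ≠ q → K p r ≠ 0 → K p r = K p q := by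
    intro r hrp hrq hne
    have h2 := h1 q r p hrq.symm (Ne.symm hpq) hrp
    have hrp0 : K r p ≠ 0 := by rw [hsym r p]; exact hne
    have h3 := sub_eq_zero.mp (unmul hrp0 h2)
    calc K p r = K r p := hsym p r
      _ = K r q := g1 r hrp hrq
      _ = K q r := hsym r q
      _ = K q p := h3.symm
      _ = K p q := hsym q p
  have g3 : ∀ r s, r ≠ p → r ≠ q → s ≠ p → s ≠ q → r ≠ s →
      K r s = if K p r ≠ 0 ∧ K p s ≠ 0 then K p q else 0 := by
    intro r s hrp hrq hsp hsq hrs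
    by_cases hr : K p r ≠ 0
    · have h2 := h1 s r p hrs.symm hsp hrp
      have hrp0 : K r p ≠ 0 := by rw [hsym r p]; exact hr
      have h3 := sub_eq_zero.mp (unmul hrp0 h2)
      have hKrs : K r s = K p s := by rw [hsym r s, ← h3, hsym s p]
      by_cases hs : K p s ≠ 0
      · rw [if_pos ⟨hr, hs⟩, hKrs]; exact g2 s hsp hsq hs
      · rw [if_neg (by tauto), hKrs]; push_neg at hs; exact hs
    · push_neg at hr
      rw [if_neg (by tauto)]
      by_cases hs : K p s ≠ 0
      · have h2 := h1 r s p hrs hrp hsp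
        have hsp0 : K s p ≠ 0 := by rw [hsym s p]; exact hs
        have h3 := sub_eq_zero.mp (unmul hsp0 h2)
        rw [← h3, hsym r p, hr]
      · push_neg at hs
        have h2 := hB p q r s hpq (Ne.symm hrp) (Ne.symm hsp) (Ne.symm hrq) (Ne.symm hsq) hrs
        have h3 : K p q * K r s = 0 := by rw [h2, hs, zero_mul]
        exact unmul ha0 h3
  set T : Finset (Fin n) := Finset.univ.filter (fun r => r = p ∨ r = q ∨ K p r ≠ 0) with hT
  have hpT : p ∈ T := by simp [hT]
  have hqT : q ∈ T := by simp [hT]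
  have hmemT : ∀ r, r ≠ p → r ≠ q → (r ∈ T ↔ K p r ≠ 0) := by
    intro r hr1 hr2; simp [hT, hr1, hr2]
  have key : ∀ y, y ≠ p → y ≠ q → K p y = if y ∈ T then K p q else 0 := by
    intro y hy1 hy2
    by_cases h : K p y ≠ 0
    · rw [if_pos ((hmemT y hy1 hy2).mpr h)]; exact g2 y hy1 hy2 h
    · push_neg at h
      rw [if_neg (fun hm => ((hmemT y hy1 hy2).mp hm) h)]; exact h
  have hq2 : ∀ z, z ≠ p → z ≠ q → K q z = K p z := by
    intro z h1' h2'
    calc K q z = K z q := hsym q z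
      _ = K z p := (g1 z h1' h2').symm
      _ = K p z := hsym z p
  have hmaster : ∀ x y : Fin n, K x y = if x ∈ T ∧ y ∈ T ∧ x ≠ y then K p q else 0 := by
    intro x y
    by_cases hxy : x = y
    · rw [if_neg (by tauto), hxy]; exact hdiag y
    by_cases hxp : x = p
    · by_cases hyq : y = q
      · rw [hxp, hyq, if_pos ⟨hpT, hqT, hpq⟩]
      · have hyp' : y ≠ p := fun h => hxy (by rw [hxp, h])
        rw [hxp, key y hyp' hyq]
        have hpy : p ≠ y := fun h => hxy (by rw [hxp, h])
        by_cases hyT : y ∈ T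
        · rw [if_pos hyT, if_pos ⟨hpT, hyT, hpy⟩]
        · rw [if_neg hyT, if_neg (by tauto)]
      -- done x = p
    · by_cases hxq : x = q
      · by_cases hyp : y = p
        · rw [hxq, hyp, if_pos ⟨hqT, hpT, Ne.symm hpq⟩, hsym q p]
        · have hyq' : y ≠ q := fun h => hxy (by rw [hxq, h])
          have hqy : q ≠ y := fun h => hxy (by rw [hxq, h])
          rw [hxq, hq2 y hyp hyq', key y hyp hyq']
          by_cases hyT : y ∈ T
          · rw [if_pos hyT, if_pos ⟨hqT, hyT, hqy⟩]
          · rw [if_neg hyT, if_neg (by tauto)]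
      · by_cases hyp : y = p
        · have hxp' : x ≠ p := hxp
          have hxq' : x ≠ q := hxq
          rw [hyp, hsym x p, key x hxp' hxq']
          by_cases hxT : x ∈ T
          · rw [if_pos hxT, if_pos ⟨hxT, hpT, fun h => hxp (h.trans rfl)⟩]
          · rw [if_neg hxT, if_neg (by tauto)]
        · by_cases hyq : y = q
          · rw [hyq, hsym x q, hq2 x hxp hxq, key x hxp hxq]
            by_cases hxT : x ∈ T
            · rw [if_pos hxT, if_pos ⟨hxT, hqT, fun h => hxq (h.trans rfl)⟩]
            · rw [if_neg hxT, if_neg (by tauto)]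
          · rw [g3 x y hxp hxq hyp hyq hxy]
            have hx' := hmemT x hxp hxq
            have hy' := hmemT y hyp hyq
            by_cases h1' : K p x ≠ 0
            · by_cases h2' : K p y ≠ 0
              · rw [if_pos ⟨h1', h2'⟩, if_pos ⟨hx'.mpr h1', hy'.mpr h2', hxy⟩]
              · rw [if_neg (by tauto), if_neg (by rintro ⟨-, hyT, -⟩; exact h2' (hy'.mp hyT))]
            · rw [if_neg (by tauto), if_neg (by rintro ⟨hxT, -, -⟩; exact h1' (hx'.mp hxT))]
  have hinner : ∀ x : Fin n, (∑ y, if x ∈ T ∧ y ∈ T ∧ x ≠ y then K p q else 0)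
      = if x ∈ T then ((T.card - 1 : ℕ) : ℂ) * K p q else 0 := by
    intro x
    by_cases hx : x ∈ T
    · rw [if_pos hx]
      have hiff : ∀ y, (x ∈ T ∧ y ∈ T ∧ x ≠ y) ↔ y ∈ T.erase x := by
        intro y
        rw [Finset.mem_erase]
        exact ⟨fun ⟨_, h2', h3'⟩ => ⟨Ne.symm h3', h2'⟩, fun ⟨h1', h2'⟩ => ⟨hx, h2', Ne.symm h1'⟩⟩
      calc (∑ y, if x ∈ T ∧ y ∈ T ∧ x ≠ y then K p q else 0)
          = ∑ y, if y ∈ T.erase x then K p q else 0 :=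
            Finset.sum_congr rfl (fun y _ => if_congr (hiff y) rfl rfl)
        _ = ∑ y ∈ Finset.univ ∩ T.erase x, K p q := Finset.sum_ite_mem _ _ _
        _ = ((T.erase x).card : ℂ) * K p q := by
            rw [Finset.univ_inter, Finset.sum_const, nsmul_eq_mul]
        _ = ((T.card - 1 : ℕ) : ℂ) * K p q := by rw [Finset.card_erase_of_mem hx]
    · rw [if_neg hx]
      exact Finset.sum_eq_zero (fun y _ => if_neg (by tauto))
  have htot : (T.card : ℂ) * (((T.card - 1 : ℕ)) : ℂ) * K p q = 0 := by
    calc (T.card : ℂ) * (((T.card - 1 : ℕ)) : ℂ) * K p q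
        = ∑ x ∈ Finset.univ ∩ T, ((T.card - 1 : ℕ) : ℂ) * K p q := by
          rw [Finset.univ_inter, Finset.sum_const, nsmul_eq_mul]; ring
      _ = ∑ x, if x ∈ T then ((T.card - 1 : ℕ) : ℂ) * K p q else 0 :=
          (Finset.sum_ite_mem _ _ _).symm
      _ = ∑ x, ∑ y, (if x ∈ T ∧ y ∈ T ∧ x ≠ y then K p q else 0) :=
          Finset.sum_congr rfl (fun x _ => (hinner x).symm)
      _ = ∑ x, ∑ y, K x y :=
          Finset.sum_congr rfl (fun x _ => Finset.sum_congr rfl (fun y _ => (hmaster x y).symm))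
      _ = 0 := hsum
  have hcard : 2 ≤ T.card := by
    rw [show (2 : ℕ) = 1 + 1 from rfl]
    exact Finset.one_lt_card.mpr ⟨p, hpT, q, hqT, hpq⟩
  have hc1 : (T.card : ℂ) ≠ 0 := Nat.cast_ne_zero.mpr (by omega)
  have hc2 : ((T.card - 1 : ℕ) : ℂ) ≠ 0 := Nat.cast_ne_zero.mpr (by omega)
  exact ha0 (unmul hc2 (unmul hc1 (by linear_combination htot)))



/-- The polynomial giving the `(i,j)` entry of the symmetric matrix. -/
noncomputable def P (n : ℕ) (i j : Fin n) : MvPolynomial (SymIdx n) ℂ :=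
  if h : i ≤ j then MvPolynomial.X ⟨(i, j), h⟩ else MvPolynomial.X ⟨(j, i), le_of_not_ge h⟩

lemma eval_P (z : SymIdx n → ℂ) (i j : Fin n) :
    MvPolynomial.eval z (P n i j) = toMat n z i j := by
  unfold P toMat
  rw [Matrix.of_apply]
  by_cases h : i ≤ j
  · rw [dif_pos h, dif_pos h, MvPolynomial.eval_X]
  · rw [dif_neg h, dif_neg h, MvPolynomial.eval_X]

lemma toMat_symm (x : SymIdx n → ℂ) (i j : Fin n) : toMat n x i j = toMat n x j i := by
  unfold toMat
  simp only [Matrix.of_apply]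
  rcases le_or_gt i j with h | h
  · rcases lt_or_eq_of_le h with h2 | h2
    · rw [dif_pos h, dif_neg (not_le.mpr h2)]
    · subst h2; rfl
  · rw [dif_neg (not_le.mpr h), dif_pos h.le]

lemma evalY {y : SymIdx n → ℂ} (hS : S ∈ Lstar n)
    (hy : ∀ q : SymIdx n, y q = S⁻¹ q.1.1 q.1.2) (i j : Fin n) :
    MvPolynomial.eval y (P n i j) = S⁻¹ i j := by
  have h1 : S⁻¹ᵀ = S⁻¹ := by rw [Matrix.transpose_nonsing_inv, hS.1]
  have hsymm : ∀ a b : Fin n, S⁻¹ a b = S⁻¹ b a := by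
    intro a b
    conv_lhs => rw [← h1]
    rfl
  unfold P
  split
  · rw [MvPolynomial.eval_X, hy]
  · rw [MvPolynomial.eval_X, hy]
    exact hsymm j i

lemma toMat_zero : toMat n (0 : SymIdx n → ℂ) = 0 := by
  ext i j
  unfold toMat
  simp only [Matrix.of_apply]
  split <;> rfl

end Star15

theorem statement15 (n : ℕ) (hn : 1 ≤ n) :
    {x : SymIdx n → ℂ |
        x ∈ MvPolynomial.zeroLocus ℂ (MvPolynomial.vanishingIdeal ℂ (Yset n)) ∧
        toMat n x ∈ LstarPerp n} = {0} := by
  classical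
  ext x
  simp only [Set.mem_setOf_eq, Set.mem_singleton_iff]
  constructor
  · rintro ⟨hx, _, hperp⟩
    have hvan : ∀ f : MvPolynomial (SymIdx n) ℂ,
        (∀ y ∈ Yset n, MvPolynomial.eval y f = 0) → MvPolynomial.eval x f = 0 := by
      intro f hf
      exact hx f (MvPolynomial.mem_vanishingIdeal_iff.mpr hf)
    set Kx := toMat n x with hKx
    have hsym : ∀ i j, Kx i j = Kx j i := Star15.toMat_symm x
    -- diagonal entries vanish
    have hdiag : ∀ i, Kx i i = 0 := by
      intro i
      have hmem : Matrix.diagonal (Pi.single i (1 : ℂ)) ∈ Lstar n := by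
        refine ⟨Matrix.isSymm_diagonal _, fun a b a' b' h h' => ?_⟩
        rw [Matrix.diagonal_apply_ne _ h, Matrix.diagonal_apply_ne _ h']
      have h0 := hperp _ hmem
      rw [Matrix.trace] at h0
      simp only [Matrix.diag, Matrix.mul_diagonal] at h0
      have h1 : (∑ j, Kx j j * (Pi.single i (1 : ℂ) : Fin n → ℂ) j) = Kx i i := by
        simp [Pi.single_apply]
      rw [h1] at h0
      exact h0
    -- total sum vanishes
    have hsum : ∑ i, ∑ j, Kx i j = 0 := by
      have hmem : (Matrix.of fun _ _ => (1 : ℂ)) ∈ Lstar n := by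
        refine ⟨?_, fun a b a' b' _ _ => rfl⟩
        ext i j; rfl
      have h0 := hperp _ hmem
      rw [Matrix.trace] at h0
      simpa [Matrix.diag, Matrix.mul_apply] using h0
    -- quadratic relations from the Zariski closure
    have hB : ∀ i j k l : Fin n, i ≠ j → i ≠ k → i ≠ l → j ≠ k → j ≠ l → k ≠ l →
        Kx i j * Kx k l = Kx i l * Kx k j := by
      intro i j k l hij hik hil hjk hjl hkl
      have hv : ∀ y ∈ Yset n, MvPolynomial.eval y
          (Star15.P n i j * Star15.P n k l - Star15.P n i l * Star15.P n k j) = 0 := by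
        intro y hy
        obtain ⟨S, hS, hU, hy'⟩ := hy
        have hdet := (Matrix.isUnit_iff_isUnit_det S).mp hU
        have hSK := Matrix.mul_nonsing_inv S hdet
        have hKS := Matrix.nonsing_inv_mul S hdet
        have ha : ∀ p q : Fin n, p ≠ q → S p q = S i j := fun p q hpq => hS.2 p q i j hpq hij
        have hrel := Star15.invB hSK hKS ha hij hik hil hjk hjl hkl
        rw [map_sub, map_mul, map_mul, Star15.evalY hS hy', Star15.evalY hS hy',
          Star15.evalY hS hy', Star15.evalY hS hy']
        linear_combination hrel
      have h0 := hvan _ hv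
      rw [map_sub, map_mul, map_mul, Star15.eval_P, Star15.eval_P, Star15.eval_P,
        Star15.eval_P] at h0
      linear_combination h0
    have hA : ∀ i j k : Fin n, i ≠ j → i ≠ k → j ≠ k →
        Kx i k * Kx j k - Kx i j * Kx k k = Kx i j * Kx k j - Kx i k * Kx j j := by
      intro i j k hij hik hjk
      have hv : ∀ y ∈ Yset n, MvPolynomial.eval y
          (Star15.P n i k * Star15.P n j k - Star15.P n i j * Star15.P n k k
            - (Star15.P n i j * Star15.P n k j - Star15.P n i k * Star15.P n j j)) = 0 := by
        intro y hy
        obtain ⟨S, hS, hU, hy'⟩ := hy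
        have hdet := (Matrix.isUnit_iff_isUnit_det S).mp hU
        have hSK := Matrix.mul_nonsing_inv S hdet
        have hKS := Matrix.nonsing_inv_mul S hdet
        have ha : ∀ p q : Fin n, p ≠ q → S p q = S i j := fun p q hpq => hS.2 p q i j hpq hij
        have hrel := Star15.invA hSK hKS ha hij hik hjk
        simp only [map_sub, map_mul, Star15.evalY hS hy']
        linear_combination hrel
      have h0 := hvan _ hv
      simp only [map_sub, map_mul, Star15.eval_P] at h0
      linear_combination h0
    have hzero := Star15.comb hsym hdiag hsum hA hB
    funext q
    have h0 := hzero q.1.1 q.1.2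
    rw [hKx] at h0
    unfold toMat at h0
    rw [Matrix.of_apply, dif_pos q.2] at h0
    simpa using h0
  · rintro rfl
    refine ⟨?_, ?_, ?_⟩
    · -- 0 lies in the Zariski closure of Y
      intro f hf
      rw [MvPolynomial.mem_vanishingIdeal_iff] at hf
      set g : SymIdx n → Polynomial ℂ :=
        fun q => if q.1.1 = q.1.2 then Polynomial.X else 0 with hg
      set φ : Polynomial ℂ := MvPolynomial.aeval g f with hφ
      have hev : ∀ u : ℂ, φ.eval u
          = MvPolynomial.eval (fun q : SymIdx n => if q.1.1 = q.1.2 then u else 0) f := by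
        intro u
        have h1 := MvPolynomial.comp_aeval_apply (Polynomial.aeval u) f (f := g)
        have h2 : (fun q : SymIdx n => (Polynomial.aeval u) (g q))
            = fun q : SymIdx n => if q.1.1 = q.1.2 then u else 0 := by
          funext q
          by_cases h : q.1.1 = q.1.2 <;> simp [hg, h]
        rw [h2] at h1
        calc φ.eval u = Polynomial.aeval u φ := by rw [Polynomial.coe_aeval_eq_eval]
          _ = MvPolynomial.aeval (fun q : SymIdx n => if q.1.1 = q.1.2 then u else 0) f := h1
          _ = MvPolynomial.eval (fun q : SymIdx n => if q.1.1 = q.1.2 then u else 0) f := rfl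
      have hroot : ∀ u : ℂ, u ≠ 0 → φ.IsRoot u := by
        intro u hu
        have hy : (fun q : SymIdx n => if q.1.1 = q.1.2 then u else 0) ∈ Yset n := by
          refine ⟨Matrix.diagonal (fun _ => u⁻¹), ?_, ?_, ?_⟩
          · refine ⟨Matrix.isSymm_diagonal _, fun a b a' b' h h' => ?_⟩
            rw [Matrix.diagonal_apply_ne _ h, Matrix.diagonal_apply_ne _ h']
          · rw [Matrix.isUnit_iff_isUnit_det _, Matrix.det_diagonal]
            simp [isUnit_iff_ne_zero, inv_ne_zero hu, Finset.prod_const, pow_ne_zero, hu]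
          · have hinv : (Matrix.diagonal (fun _ : Fin n => u⁻¹))⁻¹
                = Matrix.diagonal (fun _ => u) := by
              apply Matrix.inv_eq_right_inv
              rw [Matrix.diagonal_mul_diagonal]
              simp [inv_mul_cancel₀ hu]
            intro q
            rw [hinv, Matrix.diagonal_apply]
        rw [Polynomial.IsRoot, hev u]
        exact hf _ hy
      have hφ0 : φ = 0 := by
        apply Polynomial.eq_zero_of_infinite_isRoot
        apply Set.Infinite.mono (s := ({0}ᶜ : Set ℂ))
        · intro u hu; exact hroot u hu
        · exact Set.Finite.infinite_compl (Set.finite_singleton 0)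
      have := hev 0
      rw [hφ0] at this
      simp only [Polynomial.eval_zero] at this
      rw [show (fun q : SymIdx n => if q.1.1 = q.1.2 then (0:ℂ) else 0)
        = (0 : SymIdx n → ℂ) by funext q; simp] at this
      exact this.symm
    · rw [Star15.toMat_zero]
      exact Matrix.isSymm_zero
    · intro S _
      rw [Star15.toMat_zero, Matrix.zero_mul, Matrix.trace_zero]
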